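/- Let 𝒯_n denote the set of plane binary trees with n internal nodes. For T ∈ 𝒯_n and T' ∈ 𝒯_{n+1}, define a(T, T') = ∑ q^i over all i ∈ {0,…,n} with SG(T, i) = T' (a polynomial in ℕ[q]), and define b(T, T') = 1 if T = (T')* and b(T, T') = 0 otherwise. Then for all n ≥ 0 and all T₁, T₂ ∈ 𝒯_n: ∑_{T' ∈ 𝒯_{n+1}} a(T₁, T')·b(T₂, T') = q·∑_{S ∈ 𝒯_{n-1}} b(S, T₁)·a(S, T₂) + δ_{T₁,T₂}, as an identity in ℤ[q] (for n = 0 the sum over S is empty). -/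
import Mathlib


open Polynomial

/-- A plane binary tree: either the empty tree `∅` (a single leaf attached to the root,
no internal nodes), or the graft `T₁ ∨ T₂` of two plane binary trees (joined at a new
internal node attached to a new root). -/
inductive PBT : Type
  | empty : PBT
  | graft : PBT → PBT → PBT
deriving DecidableEq

namespace PBT

/-- The number of internal nodes of a plane binary tree. -/
def size : PBT → ℕ
  | empty => 0
  | graft l r => size l + size r + 1

/-- Splicing a plane binary tree `T` at its `i`-th leaf (leaves are numbered
`0, 1, …, size T` from left to right): following the path from leaf `i` to the root,
the edges weakly to the left form the first tree (with `i` internal nodes) and the edges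
weakly to the right form the second tree (with `size T - i` internal nodes). -/
def splice : PBT → ℕ → PBT × PBT
  | empty, _ => (empty, empty)
  | graft l r, i =>
      if i ≤ size l then ((splice l i).1, graft (splice l i).2 r)
      else (graft l (splice r (i - size l - 1)).1, (splice r (i - size l - 1)).2)

/-- `SG(T, i)`: splice `T` at leaf `i` into `(T₁, T₂)` and graft, giving `T₁ ∨ T₂`. -/
def SG (T : PBT) (i : ℕ) : PBT :=
  graft (splice T i).1 (splice T i).2

/-- `T*`: the tree obtained from `T` by removing the leftmost leaf and erasing its
parent internal node: `(∅ ∨ T₂)* = T₂` and `(T₁ ∨ T₂)* = T₁* ∨ T₂` for `T₁ ≠ ∅`. -/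
def star : PBT → PBT
  | empty => empty
  | graft empty r => r
  | graft (graft a b) r => graft (star (graft a b)) r

end PBT

namespace PBT

lemma size_eq_zero {T : PBT} (h : T.size = 0) : T = empty := by
  cases T with
  | empty => rfl
  | graft l r => simp [size] at h

lemma splice_zero (T : PBT) : splice T 0 = (empty, T) := by
  induction T with
  | empty => rfl
  | graft l r ihl ihr => simp [splice, ihl, size]

lemma splice_size (T : PBT) (i : ℕ) :
    (splice T i).1.size + (splice T i).2.size = T.size := by
  induction T generalizing i with
  | empty => simp [splice, size]
  | graft l r ihl ihr =>
    by_cases h : i ≤ l.size <;> simp [splice, h, size]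
    · have := ihl i; omega
    · have := ihr (i - l.size - 1); omega

lemma size_SG (T : PBT) (i : ℕ) : (SG T i).size = T.size + 1 := by
  have := splice_size T i
  simp [SG, size]; omega

lemma star_size : ∀ T : PBT, T ≠ empty → (star T).size + 1 = T.size
  | empty, h => absurd rfl h
  | graft empty r, _ => by simp [star, size]
  | graft (graft a b) r, _ => by
      have := star_size (graft a b) (by simp)
      simp only [star, size] at *
      omega

lemma star_graft {A : PBT} (h : A ≠ empty) (B : PBT) :
    star (graft A B) = graft (star A) B := by
  cases A with
  | empty => exact absurd rfl h
  | graft a b => rfl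

lemma star_SG_zero (T : PBT) : (SG T 0).star = T := by
  simp [SG, splice_zero, star]

lemma splice_fst_ne_empty : ∀ (T : PBT) (i : ℕ), T ≠ empty → 1 ≤ i →
    (splice T i).1 ≠ empty := by
  intro T
  induction T with
  | empty => intro i h; exact absurd rfl h
  | graft l r ihl ihr =>
    intro i _ hi
    by_cases h : i ≤ l.size
    · have hl : l ≠ empty := by
        intro he; subst he; simp [size] at h; omega
      simpa [splice, h] using ihl i hl hi
    · simp [splice, h]

lemma splice_star : ∀ (T : PBT) (i : ℕ), T ≠ empty → 1 ≤ i →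
    splice T.star (i - 1) = ((splice T i).1.star, (splice T i).2) := by
  intro T
  induction T with
  | empty => intro i h; exact absurd rfl h
  | graft l r ihl ihr =>
    intro i _ hi
    cases l with
    | empty =>
      have h0 : ¬ i ≤ size empty := by simp [size]; omega
      simp [star, splice, size, show i ≠ 0 by omega]
    | graft a b =>
      have hl0 : graft a b ≠ empty := by simp
      have hs := star_size (graft a b) hl0
      rw [star_graft hl0]
      by_cases h : i ≤ (graft a b).size
      · have h1 : i - 1 ≤ (graft a b).star.size := by omega
        have := ihl i hl0 hi
        have hne := splice_fst_ne_empty (graft a b) i hl0 hi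
        simp [splice, h, h1, this, star_graft hne]
      · have h1 : ¬ i - 1 ≤ (graft a b).star.size := by omega
        have harith : i - 1 - (graft a b).star.size - 1 = i - (graft a b).size - 1 := by omega
        simp [splice, h, h1, harith, star_graft hl0]

lemma star_SG (T : PBT) (i : ℕ) (hT : T ≠ empty) (hi : 1 ≤ i) :
    (SG T i).star = SG T.star (i - 1) := by
  have hne := splice_fst_ne_empty T i hT hi
  rw [SG, star_graft hne, SG, splice_star T i hT hi]

end PBT

/-- The up-weight in `Tree`: `a(T, T') = ∑ qⁱ` over all `i ∈ {0, …, size T}` with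
`SG(T, i) = T'` (here `q = X ∈ ℤ[q]`). -/
noncomputable def treeUp (T T' : PBT) : Polynomial ℤ :=
  ∑ i ∈ Finset.range (T.size + 1), if T.SG i = T' then X ^ i else 0

/-- The down-weight in `Tree'`: `b(T, T') = 1` if `T = (T')*`, and `0` otherwise. -/
noncomputable def treeDown (T T' : PBT) : Polynomial ℤ :=
  if T = T'.star then 1 else 0

/-- The pair `(Tree, Tree')` is a quantized dual graded graph with
differential coefficient `r = 1`: for all `n ≥ 0` and all `T₁, T₂ ∈ 𝒯_n`,
`∑_{T' ∈ 𝒯_{n+1}} a(T₁,T')·b(T₂,T') = q·∑_{S ∈ 𝒯_{n-1}} b(S,T₁)·a(S,T₂) + δ_{T₁,T₂}`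
in `ℤ[q]` (for `n = 0` the sum over `S` is empty). -/
theorem stmt_11 (n : ℕ) (T₁ T₂ : PBT) (h₁ : T₁.size = n) (h₂ : T₂.size = n) :
    (∑ᶠ T' ∈ {T : PBT | T.size = n + 1}, treeUp T₁ T' * treeDown T₂ T')
      = X * (∑ᶠ S ∈ {S : PBT | S.size + 1 = n}, treeDown S T₁ * treeUp S T₂)
        + (if T₁ = T₂ then 1 else 0) := by
  classical
  set F : Finset PBT := (Finset.range (n + 1)).image T₁.SG with hF
  have hmemF : ∀ i ∈ Finset.range (T₁.size + 1), T₁.SG i ∈ F := by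
    intro i hi
    exact Finset.mem_image.2 ⟨i, by rwa [← h₁], rfl⟩
  have hLHS : (∑ᶠ T' ∈ {T : PBT | T.size = n + 1}, treeUp T₁ T' * treeDown T₂ T')
      = ∑ T' ∈ F, treeUp T₁ T' * treeDown T₂ T' := by
    apply finsum_mem_eq_sum_of_inter_support_eq
    have hsub : Function.support (fun T' => treeUp T₁ T' * treeDown T₂ T')
        ⊆ ↑F ∩ {T : PBT | T.size = n + 1} := by
      intro T' hT'
      have hup : treeUp T₁ T' ≠ 0 := fun h0 => hT' (by simp [h0])
      have hex : ∃ i ∈ Finset.range (T₁.size + 1), T₁.SG i = T' := by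
        by_contra hc
        push_neg at hc
        exact hup (Finset.sum_eq_zero fun i hi => if_neg (hc i hi))
      obtain ⟨i, hi, hSG⟩ := hex
      refine ⟨hSG ▸ hmemF i hi, ?_⟩
      simp only [Set.mem_setOf_eq, ← hSG, PBT.size_SG, h₁]
    rw [Set.inter_eq_self_of_subset_right fun x hx => (hsub hx).2,
        Set.inter_eq_self_of_subset_right fun x hx => (hsub hx).1]
  have hstep : ∀ T' ∈ F, treeUp T₁ T' * treeDown T₂ T'
      = ∑ i ∈ Finset.range (T₁.size + 1), if T₁.SG i = T' then X ^ i * treeDown T₂ T' else 0 := by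
    intro T' _
    rw [treeUp, Finset.sum_mul]
    exact Finset.sum_congr rfl fun i _ => by split <;> simp
  have hinner : ∀ i ∈ Finset.range (T₁.size + 1),
      (∑ T' ∈ F, if T₁.SG i = T' then X ^ i * treeDown T₂ T' else 0)
        = if T₂ = (T₁.SG i).star then X ^ i else 0 := by
    intro i hi
    rw [Finset.sum_ite_eq F (T₁.SG i) (fun T' => X ^ i * treeDown T₂ T'),
        if_pos (hmemF i hi), treeDown]
    split <;> simp
  have hRHS : (∑ᶠ S ∈ {S : PBT | S.size + 1 = n}, treeDown S T₁ * treeUp S T₂)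
      = ∑ j ∈ Finset.range n, if T₁.star.SG j = T₂ then X ^ j else 0 := by
    rcases Nat.eq_zero_or_pos n with hn | hn
    · subst hn
      have he : {S : PBT | S.size + 1 = 0} = ∅ := by ext S; simp
      rw [he, finsum_mem_empty]
      simp
    · have hT₁ : T₁ ≠ PBT.empty := by
        intro he
        rw [he] at h₁
        simp [PBT.size] at h₁
        omega
      have hss : T₁.star.size + 1 = n := by rw [PBT.star_size T₁ hT₁, h₁]
      have hsing : (∑ᶠ S ∈ {S : PBT | S.size + 1 = n}, treeDown S T₁ * treeUp S T₂)
          = ∑ S ∈ ({T₁.star} : Finset PBT), treeDown S T₁ * treeUp S T₂ := by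
        apply finsum_mem_eq_sum_of_inter_support_eq
        have hsub : Function.support (fun S => treeDown S T₁ * treeUp S T₂)
            ⊆ (↑({T₁.star} : Finset PBT) : Set PBT) ∩ {S : PBT | S.size + 1 = n} := by
          intro S hS
          have hdn : treeDown S T₁ ≠ 0 := fun h0 => hS (by simp [h0])
          have hSeq : S = T₁.star := by
            by_contra hc
            exact hdn (if_neg hc)
          subst hSeq
          exact ⟨by simp, hss⟩
        rw [Set.inter_eq_self_of_subset_right fun x hx => (hsub hx).2,
            Set.inter_eq_self_of_subset_right fun x hx => (hsub hx).1]
      rw [hsing, Finset.sum_singleton, treeDown, if_pos rfl, one_mul, treeUp, hss]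
  rw [hLHS, Finset.sum_congr rfl hstep, Finset.sum_comm, Finset.sum_congr rfl hinner,
      hRHS, h₁, Finset.sum_range_succ']
  have h0term : (if T₂ = (T₁.SG 0).star then (X : Polynomial ℤ) ^ 0 else 0)
      = if T₁ = T₂ then 1 else 0 := by
    rw [PBT.star_SG_zero, pow_zero]
    exact if_congr eq_comm rfl rfl
  rw [h0term, Finset.mul_sum]
  congr 1
  refine Finset.sum_congr rfl fun j hj => ?_
  have hn : 1 ≤ n := by
    have := Finset.mem_range.1 hj; omega
  have hT₁ : T₁ ≠ PBT.empty := by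
    intro he
    rw [he] at h₁
    simp [PBT.size] at h₁
    omega
  have hstar : (T₁.SG (j + 1)).star = T₁.star.SG j := by
    rw [PBT.star_SG T₁ (j + 1) hT₁ (by omega)]
    simp
  rw [hstar, mul_ite, mul_zero, ← pow_succ']
  exact if_congr eq_comm rfl rfl
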